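/- arXiv:2601.05415 — 2 statements merged into one kernel-verified Lean document; each statement's English description precedes it below -/
import Mathlib

section
/- Let π_1,…,π_G > 0 with Σπ_g = 1, let μ_1,…,μ_G ∈ ℝ^p, and let μ = Σ_g π_g μ_g. Define Σ_B = Σ_g π_g (μ_g − μ)(μ_g − μ)^⊤ and define Γ ∈ ℝ^{p×(G−1)} columnwise by Γ_r = √(π_{r+1}) (Σ_{i=1}^r π_i (μ_i − μ_{r+1})) / √((Σ_{i=1}^r π_i)(Σ_{i=1}^{r+1} π_i)) for r = 1,…,G−1. Then Σ_B = Γ Γ^⊤. -/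
open Matrix BigOperators Finset

lemma sum_if_le (t : ℕ → ℝ) (r n : ℕ) (h : r + 1 ≤ n) :
    (∑ i ∈ Finset.range n, (if i ≤ r then t i else 0)) = ∑ i ∈ Finset.range (r+1), t i := by
  rw [← Finset.sum_filter]
  congr 1
  ext x
  simp only [Finset.mem_filter, Finset.mem_range]
  omega

lemma centered (w a b : ℕ → ℝ) (n : ℕ) (h1 : ∑ i ∈ Finset.range n, w i = 1) :
    (∑ g ∈ Finset.range n, w g *
      ((a g - ∑ i ∈ Finset.range n, w i * a i) * (b g - ∑ i ∈ Finset.range n, w i * b i)))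
    = (∑ g ∈ Finset.range n, w g * a g * b g)
      - (∑ g ∈ Finset.range n, w g * a g) * (∑ g ∈ Finset.range n, w g * b g) := by
  set A := ∑ i ∈ Finset.range n, w i * a i with hA
  set B := ∑ i ∈ Finset.range n, w i * b i with hB
  have h : ∀ g, w g * ((a g - A) * (b g - B))
      = w g * a g * b g - (w g * a g) * B - (w g * b g) * A + w g * (A*B) := by
    intro g; ring
  simp_rw [h, Finset.sum_add_distrib, Finset.sum_sub_distrib, ← Finset.sum_mul, h1]
  ring

lemma key (w a b : ℕ → ℝ) :
    ∀ n : ℕ, (∀ i, i < n → 0 < w i) →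
    (∑ g ∈ Finset.range n, w g * a g * b g)
      - (∑ g ∈ Finset.range n, w g * a g) * (∑ g ∈ Finset.range n, w g * b g)
        / (∑ g ∈ Finset.range n, w g)
    = ∑ r ∈ Finset.range (n - 1),
        w (r + 1) / ((∑ i ∈ Finset.range (r + 1), w i) * (∑ i ∈ Finset.range (r + 2), w i))
          * (∑ i ∈ Finset.range (r + 1), w i * (a i - a (r + 1)))
          * (∑ i ∈ Finset.range (r + 1), w i * (b i - b (r + 1))) := by
  intro n
  induction n with
  | zero => intro _; simp
  | succ m ih =>
    intro hw
    rcases Nat.eq_zero_or_pos m with hm | hm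
    · subst hm
      have h0 : w 0 ≠ 0 := (hw 0 (by omega)).ne'
      simp only [zero_add, Finset.sum_range_one, Finset.sum_range_zero, Nat.sub_self]
      field_simp
      ring
    · obtain ⟨q, rfl⟩ : ∃ q, m = q + 1 := ⟨m - 1, by omega⟩
      have hw' : ∀ i, i < q + 1 → 0 < w i := fun i hi => hw i (by omega)
      have hS : 0 < ∑ i ∈ Finset.range (q+1), w i :=
        Finset.sum_pos (fun i hi => hw i (by simp at hi; omega))
          (Finset.nonempty_range_iff.mpr (by omega))
      have hS' : 0 < ∑ i ∈ Finset.range (q+2), w i :=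
        Finset.sum_pos (fun i hi => hw i (by simp at hi; omega))
          (Finset.nonempty_range_iff.mpr (by omega))
      have IH := ih hw'
      have hr1 : q + 1 + 1 - 1 = q + 1 := by omega
      have hr2 : q + 1 - 1 = q := by omega
      rw [hr1]
      conv_rhs => rw [Finset.sum_range_succ]
      rw [Finset.sum_range_succ (fun g => w g * a g * b g) (q+1),
          Finset.sum_range_succ (fun g => w g * a g) (q+1),
          Finset.sum_range_succ (fun g => w g * b g) (q+1),
          Finset.sum_range_succ w (q+1)]
      rw [hr2] at IH
      have ha : (∑ i ∈ Finset.range (q+1), w i * (a i - a (q+1)))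
          = (∑ i ∈ Finset.range (q+1), w i * a i) - (∑ i ∈ Finset.range (q+1), w i) * a (q+1) := by
        simp [mul_sub, Finset.sum_sub_distrib, Finset.sum_mul]
      have hb : (∑ i ∈ Finset.range (q+1), w i * (b i - b (q+1)))
          = (∑ i ∈ Finset.range (q+1), w i * b i) - (∑ i ∈ Finset.range (q+1), w i) * b (q+1) := by
        simp [mul_sub, Finset.sum_sub_distrib, Finset.sum_mul]
      rw [ha, hb, ← IH]
      have hSS : (∑ i ∈ Finset.range (q+1), w i) ≠ 0 := hS.ne'
      have hSS' : (∑ i ∈ Finset.range (q+1), w i) + w (q+1) ≠ 0 := by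
        have := hS'.ne'
        rwa [Finset.sum_range_succ] at this
      field_simp
      ring

/-- the between-group covariance Σ_B factors as ΓΓᵀ with Γ the
Helmert-type contrast matrix of the group means. -/
theorem between_group_covariance_factorization
    {p G : ℕ} (hG : 2 ≤ G)
    (pr : Fin G → ℝ) (hpos : ∀ g, 0 < pr g) (hsum : ∑ g, pr g = 1)
    (μ : Fin G → (Fin p → ℝ)) (μbar : Fin p → ℝ)
    (hμbar : μbar = ∑ g, pr g • μ g)
    (SB : Matrix (Fin p) (Fin p) ℝ)
    (hSB : SB = ∑ g, pr g • Matrix.vecMulVec (μ g - μbar) (μ g - μbar))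
    (Γ : Matrix (Fin p) (Fin (G - 1)) ℝ)
    (hΓ : ∀ (r : Fin (G - 1)) (j : Fin p),
      Γ j r =
        Real.sqrt (pr ⟨r.val + 1, by have := r.isLt; omega⟩) *
          (∑ i : Fin G, if (i : ℕ) ≤ r.val
            then pr i * (μ i j - μ ⟨r.val + 1, by have := r.isLt; omega⟩ j) else 0) /
        Real.sqrt ((∑ i : Fin G, if (i : ℕ) ≤ r.val then pr i else 0) *
          (∑ i : Fin G, if (i : ℕ) ≤ r.val + 1 then pr i else 0))) :
    SB = Γ * Γᵀ := by
  -- embedding of ℕ into Fin G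
  have hG0 : 0 < G := by omega
  set f : ℕ → Fin G := fun i => ⟨min i (G-1), by omega⟩ with hf
  have hfi : ∀ i (hi : i < G), f i = ⟨i, hi⟩ := by
    intro i hi; apply Fin.ext; simp [hf]; omega
  have hconv : ∀ F : Fin G → ℝ, (∑ g : Fin G, F g) = ∑ i ∈ Finset.range G, F (f i) := by
    intro F
    rw [← Fin.sum_univ_eq_sum_range (fun i => F (f i)) G]
    apply Finset.sum_congr rfl
    intro g _
    rw [hfi g.val g.isLt]
  set w : ℕ → ℝ := fun i => pr (f i) with hwdef
  have hwpos : ∀ i, 0 < w i := fun i => hpos _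
  have hwsum : ∑ i ∈ Finset.range G, w i = 1 := by rw [← hconv pr]; exact hsum
  ext j k
  rw [hSB, Matrix.mul_apply]
  simp only [Matrix.transpose_apply, Matrix.sum_apply, Matrix.smul_apply,
    Matrix.vecMulVec_apply, smul_eq_mul, Pi.sub_apply]
  set a : ℕ → ℝ := fun i => μ (f i) j with hadef
  set b : ℕ → ℝ := fun i => μ (f i) k with hbdef
  have hbar : ∀ l : Fin p, μbar l = ∑ g : Fin G, pr g * μ g l := by
    intro l
    rw [hμbar]
    simp [Finset.sum_apply]
  -- LHS as a range sum
  have hL : (∑ g : Fin G, pr g * ((μ g j - μbar j) * (μ g k - μbar k)))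
      = (∑ g ∈ Finset.range G, w g * a g * b g)
        - (∑ g ∈ Finset.range G, w g * a g) * (∑ g ∈ Finset.range G, w g * b g)
          / (∑ g ∈ Finset.range G, w g) := by
    rw [hwsum, div_one]
    rw [← centered w a b G hwsum]
    rw [hconv (fun g => pr g * ((μ g j - μbar j) * (μ g k - μbar k)))]
    apply Finset.sum_congr rfl
    intro i _
    rw [hbar j, hbar k, hconv (fun g => pr g * μ g j), hconv (fun g => pr g * μ g k)]
  rw [hL, key w a b G (fun i _ => hwpos i)]
  -- now match the two sums over range (G-1) / Fin (G-1)
  rw [← Fin.sum_univ_eq_sum_range (fun r =>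
    w (r + 1) / ((∑ i ∈ Finset.range (r + 1), w i) * (∑ i ∈ Finset.range (r + 2), w i))
      * (∑ i ∈ Finset.range (r + 1), w i * (a i - a (r + 1)))
      * (∑ i ∈ Finset.range (r + 1), w i * (b i - b (r + 1)))) (G-1)]
  apply Finset.sum_congr rfl
  intro r _
  have hrG : (r : ℕ) + 1 < G := by have := r.isLt; omega
  have hfr : f ((r : ℕ) + 1) = ⟨(r : ℕ) + 1, hrG⟩ := hfi _ hrG
  -- rewrite Γ entries
  have hifconv : ∀ (c : ℕ) (hc : c + 1 ≤ G) (t : Fin G → ℝ),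
      (∑ i : Fin G, if (i : ℕ) ≤ c then t i else 0) = ∑ i ∈ Finset.range (c+1), t (f i) := by
    intro c hc t
    rw [hconv (fun i => if (i : ℕ) ≤ c then t i else 0)]
    rw [← sum_if_le (fun i => t (f i)) c G hc]
    apply Finset.sum_congr rfl
    intro i hi
    have hiG : i < G := Finset.mem_range.mp hi
    have hmin : min i (G-1) = i := by omega
    by_cases h : i ≤ c
    · simp only [hf, hmin, h, if_true]
    · simp only [hf, hmin, h, if_false]
  have hΓj := hΓ r j
  have hΓk := hΓ r k
  have h22 : (r:ℕ) + 1 + 1 = (r:ℕ) + 2 := by omega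
  rw [hifconv (r : ℕ) (by omega) pr,
      hifconv (r : ℕ) (by omega) (fun i => pr i * (μ i j - μ ⟨(r:ℕ)+1, hrG⟩ j)),
      hifconv ((r : ℕ)+1) (by omega) pr, h22] at hΓj
  rw [hifconv (r : ℕ) (by omega) pr,
      hifconv (r : ℕ) (by omega) (fun i => pr i * (μ i k - μ ⟨(r:ℕ)+1, hrG⟩ k)),
      hifconv ((r : ℕ)+1) (by omega) pr, h22] at hΓk
  simp only [← hwdef, ← hfr, ← hadef, ← hbdef] at hΓj hΓk
  rw [hΓj, hΓk]
  -- sqrt algebra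
  set pv := w ((r : ℕ) + 1) with hpv
  set S1 := ∑ i ∈ Finset.range ((r:ℕ) + 1), w i with hS1
  set S2 := ∑ i ∈ Finset.range ((r:ℕ) + 2), w i with hS2
  set A := ∑ i ∈ Finset.range ((r:ℕ) + 1), w i * (a i - a ((r:ℕ) + 1)) with hA
  set B := ∑ i ∈ Finset.range ((r:ℕ) + 1), w i * (b i - b ((r:ℕ) + 1)) with hB
  have hpv0 : 0 ≤ pv := (hwpos _).le
  have hS1p : 0 < S1 := Finset.sum_pos (fun i _ => hwpos i) (Finset.nonempty_range_iff.mpr (by omega))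
  have hS2p : 0 < S2 := Finset.sum_pos (fun i _ => hwpos i) (Finset.nonempty_range_iff.mpr (by omega))
  have e1 : Real.sqrt pv * Real.sqrt pv = pv := Real.mul_self_sqrt hpv0
  have e2 : Real.sqrt (S1 * S2) * Real.sqrt (S1 * S2) = S1 * S2 :=
    Real.mul_self_sqrt (mul_nonneg hS1p.le hS2p.le)
  calc pv / (S1 * S2) * A * B
      = (Real.sqrt pv * Real.sqrt pv) * A * B / (Real.sqrt (S1*S2) * Real.sqrt (S1*S2)) := by
        rw [e1, e2]; ring
    _ = Real.sqrt pv * A / Real.sqrt (S1 * S2) * (Real.sqrt pv * B / Real.sqrt (S1 * S2)) := by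
        ring
end

section
/- Let Σ_g ∈ ℝ^{p×p} be symmetric positive definite, Γ ∈ ℝ^{p×(G−1)} of full column rank, and Σ_B = ΓΓ^⊤. Suppose Φ_g ∈ ℝ^{p×(G−1)} has full column rank and col(Φ_g) = col(Σ_g^{-1}Γ). Define Θ_g = (Σ_g + Σ_B)^{-1}Γ. Then col(Θ_g) = col(Φ_g), i.e., there exists an invertible R_g ∈ ℝ^{(G−1)×(G−1)} with Θ_g = Φ_g R_g. -/
open Matrix BigOperators

/-- the surrogate Θ_g = (Σ_g + Σ_B)⁻¹Γ spans the same column space as any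
full-rank basis Φ_g of col(Σ_g⁻¹Γ): Θ_g = Φ_g R_g with R_g invertible. -/
theorem surrogate_spans_discriminant_subspace
    {p G : ℕ}
    (Sg : Matrix (Fin p) (Fin p) ℝ) (hSg : Sg.PosDef)
    (Γ : Matrix (Fin p) (Fin (G - 1)) ℝ) (hΓ : Function.Injective Γ.mulVec)
    (Φg : Matrix (Fin p) (Fin (G - 1)) ℝ) (hΦg : Function.Injective Φg.mulVec)
    (hcol : LinearMap.range Φg.mulVecLin = LinearMap.range (Sg⁻¹ * Γ).mulVecLin) :
    ∃ R : Matrix (Fin (G - 1)) (Fin (G - 1)) ℝ,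
      IsUnit R.det ∧ (Sg + Γ * Γᵀ)⁻¹ * Γ = Φg * R := by
  classical
  have hT : Γᴴ = Γᵀ := rfl
  have hA : (Sg + Γ * Γᵀ).PosDef := by
    have := Matrix.posSemidef_self_mul_conjTranspose Γ
    rw [hT] at this
    exact hSg.add_posSemidef this
  have hAunit : IsUnit (Sg + Γ * Γᵀ).det := hA.det_pos.ne'.isUnit
  have hSunit : IsUnit Sg.det := hSg.det_pos.ne'.isUnit
  set M : Matrix (Fin (G-1)) (Fin (G-1)) ℝ := 1 + Γᵀ * Sg⁻¹ * Γ with hM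
  have hMpd : M.PosDef := by
    have h1 : (Γᵀ * Sg⁻¹ * Γ).PosSemidef := by
      have := (hSg.inv.posSemidef).conjTranspose_mul_mul_same Γ
      rwa [hT] at this
    exact Matrix.PosDef.add_posSemidef (by simpa using Matrix.PosDef.diagonal (fun _ : Fin (G-1) => (one_pos : (0:ℝ) < 1))) h1
  have hMunit : IsUnit M.det := hMpd.det_pos.ne'.isUnit
  have hW : (Sg + Γ * Γᵀ)⁻¹ * Γ = Sg⁻¹ * Γ * M⁻¹ := by
    have key : (Sg + Γ * Γᵀ) * (Sg⁻¹ * Γ * M⁻¹) = Γ := by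
      have h1 : (Sg + Γ * Γᵀ) * (Sg⁻¹ * Γ * M⁻¹)
          = (Γ + Γ * (Γᵀ * Sg⁻¹ * Γ)) * M⁻¹ := by
        rw [Matrix.add_mul, Matrix.add_mul]
        congr 1
        · rw [← Matrix.mul_assoc, ← Matrix.mul_assoc, Matrix.mul_nonsing_inv _ hSunit,
            Matrix.one_mul]
        · simp only [Matrix.mul_assoc]
      have h2 : Γ + Γ * (Γᵀ * Sg⁻¹ * Γ) = Γ * M := by
        rw [hM, Matrix.mul_add, Matrix.mul_one]
      rw [h1, h2, Matrix.mul_assoc, Matrix.mul_nonsing_inv _ hMunit, Matrix.mul_one]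
    calc (Sg + Γ * Γᵀ)⁻¹ * Γ
        = (Sg + Γ * Γᵀ)⁻¹ * ((Sg + Γ * Γᵀ) * (Sg⁻¹ * Γ * M⁻¹)) := by rw [key]
      _ = Sg⁻¹ * Γ * M⁻¹ := by
          rw [← Matrix.mul_assoc, Matrix.nonsing_inv_mul _ hAunit, Matrix.one_mul]
  -- obtain C with Sg⁻¹ Γ = Φg C
  have hmem : ∀ j, (Sg⁻¹ * Γ).mulVecLin (Pi.single j 1) ∈ LinearMap.range Φg.mulVecLin := by
    intro j; rw [hcol]; exact LinearMap.mem_range_self _ _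
  choose c hc using hmem
  set C : Matrix (Fin (G-1)) (Fin (G-1)) ℝ := Matrix.of (fun i j => c j i) with hCdef
  have hC : Φg * C = Sg⁻¹ * Γ := by
    ext i j
    have h := congrFun (hc j) i
    simp only [Matrix.mulVecLin_apply] at h
    have hcol_j : (Sg⁻¹ * Γ).mulVec (Pi.single j 1) i = (Sg⁻¹ * Γ) i j := by
      simp [Matrix.mulVec_single]
    rw [hcol_j] at h
    rw [← h]
    simp [Matrix.mul_apply, Matrix.mulVec, dotProduct, hCdef]
  have hinj : Function.Injective (Sg⁻¹ * Γ).mulVec := by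
    have hSi : Function.Injective (Sg⁻¹).mulVec :=
      Matrix.mulVec_injective_iff_isUnit.mpr hSg.inv.isUnit
    intro x y hxy
    apply hΓ
    apply hSi
    simpa [Matrix.mulVec_mulVec] using hxy
  have hCinj : Function.Injective C.mulVec := by
    intro x y hxy
    apply hinj
    rw [← hC, ← Matrix.mulVec_mulVec, ← Matrix.mulVec_mulVec, hxy]
  have hCunit : IsUnit C.det :=
    (Matrix.isUnit_iff_isUnit_det _).mp (Matrix.mulVec_injective_iff_isUnit.mp hCinj)
  refine ⟨C * M⁻¹, ?_, ?_⟩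
  · rw [Matrix.det_mul]
    exact hCunit.mul ((Matrix.isUnit_nonsing_inv_det_iff).mpr hMunit)
  · rw [hW, ← hC, Matrix.mul_assoc]
end
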